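/- (Linear convergence of one full iteration of Oblique Subspace Pursuit.) Let Ψ, Ψ̃ ∈ K^{m×n}, let x* ∈ K^n be s-sparse with support J*, let z ∈ K^m and y = Ψx* + z. Assume θ := θ_{3s}(Ψ̃*Ψ) < 1 and set δ := δ_s(Ψ), δ̃ := δ_{2s}(Ψ̃). Let J_t ⊆ {1,…,n} with |J_t| = s and let x_t be the vector supported on J_t with Ψ̃_{J_t}*(y − Ψx_t) = 0. Perform one ObSP iteration: let w = Ψ̃*(y − Ψx_t); let J̄ be a set of s indices with min_{j∈J̄}|w_j| ≥ max_{j∉J̄}|w_j|; set J̃ = J_t ∪ J̄; let x̃ be the vector supported on J̃ with Ψ̃_{J̃}*(y − Ψx̃) = 0; let J_{t+1} ⊆ J̃ with |J_{t+1}| = s and min_{j∈J_{t+1}}|x̃_j| ≥ max_{j∈J̃\J_{t+1}}|x̃_j|; and let x_{t+1} be the vector supported on J_{t+1} with Ψ̃_{J_{t+1}}*(y − Ψx_{t+1}) = 0. Then ‖x_{t+1} − x*‖₂ ≤ ρ·‖x_t − x*‖₂ + τ·‖z‖₂, where ρ = ρ₁ρ₂ρ₃ and τ = τ₁ + ρ₁τ₂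 + ρ₁ρ₂τ₃, with ρ₁ = 1/√(1−θ²), τ₁ = √(1+δ̃)/(1−θ), ρ₂ = (1+θ)/(1−θ), τ₂ = 2√(1+δ̃)/(1−θ), ρ₃ = max( θ/(1−θ), 2θ(1−θ)/(1+2θ+2θ²) ), τ₃ = max( 1/(1−θ), 2(1−θ)/(1+2θ+2θ²) )·( 2√(1+δ)(1+δ̃)/(1−θ) ). Moreover, ρ < 1 whenever θ_{3s}(Ψ̃*Ψ) < 0.325. -/

import Mathlib

open scoped BigOperators
open Matrix MeasureTheory

noncomputable section

namespace ObliquePursuit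

variable {𝕜 : Type*} [RCLike 𝕜]

/-- The Euclidean (`ℓ²`) norm of a finitely indexed vector. -/
def l2 {ι : Type*} [Fintype ι] (x : ι → 𝕜) : ℝ :=
  Real.sqrt (∑ i, ‖x i‖ ^ 2)

/-- The spectral (`ℓ² → ℓ²` operator) norm of a matrix. -/
def specNorm {ι κ : Type*} [Fintype ι] [Fintype κ] [DecidableEq κ]
    (M : Matrix ι κ 𝕜) : ℝ :=
  ‖LinearMap.toContinuousLinearMap (Matrix.toEuclideanLin M)‖

/-- `x` is `s`-sparse: it has at most `s` nonzero entries. -/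
def Sparse {ι : Type*} (s : ℕ) (x : ι → 𝕜) : Prop :=
  ∃ J : Finset ι, J.card ≤ s ∧ ∀ i, x i ≠ 0 → i ∈ J

/-- The `s`-restricted biorthogonality constant `θ_s(M)`: the smallest `δ ≥ 0` such that
`|⟨y, Mx⟩ − ⟨y, x⟩| ≤ δ‖x‖₂‖y‖₂` for all `x, y` supported on a common index set of
cardinality at most `s`. -/
def theta {ι : Type*} [Fintype ι] (s : ℕ) (M : Matrix ι ι 𝕜) : ℝ :=
  sInf {δ : ℝ | 0 ≤ δ ∧ ∀ J : Finset ι, J.card ≤ s →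
    ∀ x y : ι → 𝕜, (∀ i, x i ≠ 0 → i ∈ J) → (∀ i, y i ≠ 0 → i ∈ J) →
      ‖star y ⬝ᵥ M.mulVec x - star y ⬝ᵥ x‖ ≤ δ * l2 x * l2 y}

/-- The `s`-restricted isometry constant `δ_s(Ψ)`. -/
def ric {ι κ : Type*} [Fintype ι] [Fintype κ] (s : ℕ) (Ψ : Matrix ι κ 𝕜) : ℝ :=
  sInf {δ : ℝ | 0 ≤ δ ∧ ∀ x : κ → 𝕜, Sparse s x →
    (1 - δ) * l2 x ^ 2 ≤ l2 (Ψ.mulVec x) ^ 2 ∧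
      l2 (Ψ.mulVec x) ^ 2 ≤ (1 + δ) * l2 x ^ 2}

/-- Coordinate projection `Π_J`: keep the entries indexed by `J`, zero out the others. -/
def proj {ι : Type*} [DecidableEq ι] (J : Finset ι) (x : ι → 𝕜) : ι → 𝕜 :=
  fun i => if i ∈ J then x i else 0

/-- The column submatrix `Ψ_J` of `Ψ` formed by the columns indexed by `J`. -/
def cols {ι κ : Type*} (Ψ : Matrix ι κ 𝕜) (J : Finset κ) :
    Matrix ι {j // j ∈ J} 𝕜 :=
  Ψ.submatrix id fun j => (j : κ)

/-- The `j`-th column of `Ψ`. -/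
def col {ι κ : Type*} (Ψ : Matrix ι κ 𝕜) (j : κ) : ι → 𝕜 :=
  fun i => Ψ i j

/-- The complementary oblique projector `E = I − Ψ_J (Ψ̃_J^* Ψ_J)⁻¹ Ψ̃_J^*`
(equal to `I` when `J = ∅`). -/
def obliqueE {ι κ : Type*} [Fintype ι] [DecidableEq ι] [DecidableEq κ]
    (Ψ Ψt : Matrix ι κ 𝕜) (J : Finset κ) : Matrix ι ι 𝕜 :=
  1 - cols Ψ J * ((cols Ψt J)ᴴ * cols Ψ J)⁻¹ * (cols Ψt J)ᴴ

/-- The smallest (real) eigenvalue of a matrix. -/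
def lamMin {ι : Type*} [Fintype ι] (G : Matrix ι ι 𝕜) : ℝ :=
  sInf {r : ℝ | ∃ v : ι → 𝕜, v ≠ 0 ∧ G.mulVec v = (r : 𝕜) • v}

/-- The `j`-th largest singular value (1-indexed) of a matrix, characterized via the
Eckart–Young–Mirsky theorem: `σ_j(A) = min { ‖A − B‖ : rank B < j }` where `‖·‖` is the
spectral norm. -/
def singVal {ι κ : Type*} [Fintype ι] [Fintype κ] [DecidableEq κ]
    (A : Matrix ι κ 𝕜) (j : ℕ) : ℝ :=
  sInf {r : ℝ | ∃ B : Matrix ι κ 𝕜, B.rank < j ∧ r = specNorm (A - B)}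


/-! ### Auxiliary lemmas for Statement 13 -/

section Aux

lemma l2_nonneg {ι : Type*} [Fintype ι] (x : ι → 𝕜) : 0 ≤ l2 x := Real.sqrt_nonneg _

lemma l2_sq {ι : Type*} [Fintype ι] (x : ι → 𝕜) : l2 x ^ 2 = ∑ i, ‖x i‖ ^ 2 :=
  Real.sq_sqrt (by positivity)

lemma l2_eq_norm {ι : Type*} [Fintype ι] (x : ι → 𝕜) :
    l2 x = ‖(WithLp.equiv 2 (ι → 𝕜)).symm x‖ := by
  rw [EuclideanSpace.norm_eq]; rfl

lemma l2_triangle {ι : Type*} [Fintype ι] (x y : ι → 𝕜) : l2 (x + y) ≤ l2 x + l2 y := by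
  rw [l2_eq_norm, l2_eq_norm, l2_eq_norm]
  exact norm_add_le ((WithLp.equiv 2 (ι → 𝕜)).symm x) ((WithLp.equiv 2 (ι → 𝕜)).symm y)

lemma l2_neg {ι : Type*} [Fintype ι] (x : ι → 𝕜) : l2 (-x) = l2 x := by
  unfold l2; simp

lemma l2_sub_rev {ι : Type*} [Fintype ι] (x y : ι → 𝕜) : l2 (x - y) = l2 (y - x) := by
  rw [← l2_neg (x - y)]; congr 1; abel

lemma norm_dot_le {ι : Type*} [Fintype ι] (x y : ι → 𝕜) :
    ‖star x ⬝ᵥ y‖ ≤ l2 x * l2 y := by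
  have h : star x ⬝ᵥ y =
      inner 𝕜 ((WithLp.equiv 2 (ι → 𝕜)).symm x) ((WithLp.equiv 2 (ι → 𝕜)).symm y) := by
    rw [PiLp.inner_apply]
    simp [dotProduct, RCLike.inner_apply, RCLike.star_def, mul_comm]
  rw [h, l2_eq_norm, l2_eq_norm]
  exact norm_inner_le_norm _ _

lemma proj_eq_self {ι : Type*} [Fintype ι] [DecidableEq ι] {J : Finset ι} {x : ι → 𝕜}
    (h : ∀ i, x i ≠ 0 → i ∈ J) : proj J x = x := by
  funext i; unfold proj
  by_cases hi : i ∈ J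
  · simp [hi]
  · simp only [hi, if_false]
    by_contra hx; exact hi (h i fun h0 => hx h0.symm)

lemma proj_sub {ι : Type*} [Fintype ι] [DecidableEq ι] (J : Finset ι) (x y : ι → 𝕜) :
    proj J (x - y) = proj J x - proj J y := by
  funext i; unfold proj; by_cases hi : i ∈ J <;> simp [hi]

lemma proj_add {ι : Type*} [Fintype ι] [DecidableEq ι] (J : Finset ι) (x y : ι → 𝕜) :
    proj J (x + y) = proj J x + proj J y := by
  funext i; unfold proj; by_cases hi : i ∈ J <;> simp [hi]

lemma l2_proj_eq {ι : Type*} [Fintype ι] [DecidableEq ι] (J : Finset ι) (x : ι → 𝕜) :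
    l2 (proj J x) = Real.sqrt (∑ i ∈ J, ‖x i‖ ^ 2) := by
  unfold l2 proj
  congr 1
  rw [← Finset.sum_filter_add_sum_filter_not Finset.univ (· ∈ J)]
  have h1 : ∀ i ∈ Finset.univ.filter (· ∈ J), ‖if i ∈ J then x i else 0‖ ^ 2 = ‖x i‖ ^ 2 := by
    intro i hi; simp at hi; simp [hi]
  have h2 : ∀ i ∈ Finset.univ.filter (¬ · ∈ J), ‖if i ∈ J then x i else 0‖ ^ 2 = 0 := by
    intro i hi; simp at hi; simp [hi]
  rw [Finset.sum_congr rfl h1, Finset.sum_congr rfl h2, Finset.sum_const_zero, add_zero]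
  congr 1
  ext i; simp

lemma l2_proj_sq {ι : Type*} [Fintype ι] [DecidableEq ι] (J : Finset ι) (x : ι → 𝕜) :
    l2 (proj J x) ^ 2 = ∑ i ∈ J, ‖x i‖ ^ 2 := by
  rw [l2_proj_eq]; exact Real.sq_sqrt (by positivity)

lemma l2_proj_mono {ι : Type*} [Fintype ι] [DecidableEq ι] {J J' : Finset ι} (h : J ⊆ J')
    (x : ι → 𝕜) : l2 (proj J x) ≤ l2 (proj J' x) := by
  rw [l2_proj_eq, l2_proj_eq]
  exact Real.sqrt_le_sqrt (Finset.sum_le_sum_of_subset_of_nonneg h (by intros; positivity))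

lemma l2_sq_split {ι : Type*} [Fintype ι] [DecidableEq ι] (J : Finset ι) (x : ι → 𝕜) :
    l2 x ^ 2 = l2 (proj J x) ^ 2 + l2 (proj (Finset.univ \ J) x) ^ 2 := by
  rw [l2_sq, l2_proj_sq, l2_proj_sq]
  rw [← Finset.sum_sdiff (Finset.subset_univ J)]
  ring

lemma star_proj_dot {ι : Type*} [Fintype ι] [DecidableEq ι] (V : Finset ι) (w : ι → 𝕜) :
    star (proj V w) ⬝ᵥ w = ((∑ i ∈ V, ‖w i‖ ^ 2 : ℝ) : 𝕜) := by
  unfold proj dotProduct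
  have step : ∀ i : ι, star (if i ∈ V then w i else 0) * w i
      = if i ∈ V then ((‖w i‖ ^ 2 : ℝ) : 𝕜) else 0 := by
    intro i
    by_cases hi : i ∈ V
    · simp only [hi, if_true]
      rw [RCLike.star_def, RCLike.conj_mul]; push_cast; ring
    · simp [hi]
  simp only [Pi.star_apply, step, Finset.sum_ite_mem, Finset.univ_inter]
  push_cast
  rfl

lemma star_proj_dot_l2 {ι : Type*} [Fintype ι] [DecidableEq ι] (V : Finset ι) (w : ι → 𝕜) :
    star (proj V w) ⬝ᵥ w = ((l2 (proj V w) ^ 2 : ℝ) : 𝕜) := by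
  rw [star_proj_dot, l2_proj_sq]

lemma dot_agree {ι : Type*} [Fintype ι] {v a b : ι → 𝕜} (h : ∀ i, v i ≠ 0 → a i = b i) :
    star v ⬝ᵥ a = star v ⬝ᵥ b := by
  unfold dotProduct
  apply Finset.sum_congr rfl
  intro i _
  by_cases hv : v i = 0
  · simp [hv]
  · rw [h i hv]

lemma adjoint_dot {m n : ℕ} (A : Matrix (Fin m) (Fin n) 𝕜) (v : Fin n → 𝕜) (z : Fin m → 𝕜) :
    star v ⬝ᵥ (Aᴴ.mulVec z) = star (A.mulVec v) ⬝ᵥ z := by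
  unfold dotProduct Matrix.mulVec Matrix.conjTranspose dotProduct
  simp only [Pi.star_apply, Matrix.of_apply, Finset.mul_sum, star_sum, Finset.sum_mul, star_mul',
    Matrix.map_apply, Matrix.transpose_apply]
  rw [Finset.sum_comm]
  apply Finset.sum_congr rfl; intro i _
  apply Finset.sum_congr rfl; intro j _
  ring

lemma conjT_mulVec_apply {m n : ℕ} (A : Matrix (Fin m) (Fin n) 𝕜) (v : Fin m → 𝕜) (j : Fin n) :
    Aᴴ.mulVec v j = star (col A j) ⬝ᵥ v := by
  unfold Matrix.mulVec dotProduct Matrix.conjTranspose col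
  simp

lemma sum_le_sum_sel {ι : Type*} (P Q : Finset ι) (f : ι → ℝ) (h0 : ∀ i, 0 ≤ f i)
    (hc : P.card ≤ Q.card) (hsel : ∀ i ∈ P, ∀ j ∈ Q, f i ≤ f j) :
    ∑ i ∈ P, f i ≤ ∑ j ∈ Q, f j := by
  rcases Q.eq_empty_or_nonempty with hQ | hQ
  · subst hQ; simp at hc; subst hc; simp
  · obtain ⟨j₀, hj₀, hmin⟩ := Q.exists_min_image f hQ
    calc ∑ i ∈ P, f i ≤ P.card • f j₀ :=
          Finset.sum_le_card_nsmul P f (f j₀) (fun i hi => hsel i hi j₀ hj₀)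
      _ ≤ Q.card • f j₀ := by
          rw [nsmul_eq_mul, nsmul_eq_mul]
          exact mul_le_mul_of_nonneg_right (by exact_mod_cast hc) (h0 j₀)
      _ ≤ ∑ j ∈ Q, f j := Finset.card_nsmul_le_sum Q f (f j₀) hmin

lemma l2_mulVec_sq_le {ι κ : Type*} [Fintype ι] [Fintype κ] (M : Matrix ι κ 𝕜) (x : κ → 𝕜) :
    l2 (M.mulVec x) ^ 2 ≤ (∑ i, ∑ j, ‖M i j‖ ^ 2) * l2 x ^ 2 := by
  rw [l2_sq, l2_sq]
  unfold Matrix.mulVec dotProduct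
  calc ∑ i, ‖∑ j, M i j * x j‖ ^ 2
      ≤ ∑ i, (∑ j, ‖M i j‖ * ‖x j‖) ^ 2 := by
        apply Finset.sum_le_sum; intro i _
        have h1 : ‖∑ j, M i j * x j‖ ≤ ∑ j, ‖M i j‖ * ‖x j‖ := by
          calc ‖∑ j, M i j * x j‖ ≤ ∑ j, ‖M i j * x j‖ := norm_sum_le _ _
            _ = ∑ j, ‖M i j‖ * ‖x j‖ := by simp [norm_mul]
        exact pow_le_pow_left₀ (norm_nonneg _) h1 2
    _ ≤ ∑ i, (∑ j, ‖M i j‖ ^ 2) * (∑ j, ‖x j‖ ^ 2) := by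
        apply Finset.sum_le_sum; intro i _
        exact Finset.sum_mul_sq_le_sq_mul_sq _ _ _
    _ = (∑ i, ∑ j, ‖M i j‖ ^ 2) * ∑ j, ‖x j‖ ^ 2 := by rw [Finset.sum_mul]

lemma theta_set_nonempty {ι : Type*} [Fintype ι] (s : ℕ) (M : Matrix ι ι 𝕜) :
    {δ : ℝ | 0 ≤ δ ∧ ∀ J : Finset ι, J.card ≤ s →
    ∀ x y : ι → 𝕜, (∀ i, x i ≠ 0 → i ∈ J) → (∀ i, y i ≠ 0 → i ∈ J) →
      ‖star y ⬝ᵥ M.mulVec x - star y ⬝ᵥ x‖ ≤ δ * l2 x * l2 y}.Nonempty := by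
  refine ⟨Real.sqrt (∑ i, ∑ j, ‖M i j‖ ^ 2) + 1, ⟨by positivity, ?_⟩⟩
  intro J hJ x y hx hy
  have h1 : ‖star y ⬝ᵥ M.mulVec x‖ ≤ l2 y * (Real.sqrt (∑ i, ∑ j, ‖M i j‖ ^ 2) * l2 x) := by
    refine le_trans (norm_dot_le y (M.mulVec x)) ?_
    apply mul_le_mul_of_nonneg_left ?_ (l2_nonneg y)
    have := l2_mulVec_sq_le M x
    have h2 : l2 (M.mulVec x) = Real.sqrt (l2 (M.mulVec x) ^ 2) :=
      (Real.sqrt_sq (l2_nonneg _)).symm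
    rw [h2]
    calc Real.sqrt (l2 (M.mulVec x) ^ 2) ≤ Real.sqrt ((∑ i, ∑ j, ‖M i j‖ ^ 2) * l2 x ^ 2) :=
          Real.sqrt_le_sqrt this
      _ = Real.sqrt (∑ i, ∑ j, ‖M i j‖ ^ 2) * l2 x := by
          rw [Real.sqrt_mul (by positivity), Real.sqrt_sq (l2_nonneg _)]
  have h2 : ‖star y ⬝ᵥ x‖ ≤ l2 y * l2 x := by
    have := norm_dot_le y x; linarith
  calc ‖star y ⬝ᵥ M.mulVec x - star y ⬝ᵥ x‖ ≤ ‖star y ⬝ᵥ M.mulVec x‖ + ‖star y ⬝ᵥ x‖ :=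
        norm_sub_le _ _
    _ ≤ (Real.sqrt (∑ i, ∑ j, ‖M i j‖ ^ 2) + 1) * l2 x * l2 y := by
        have h3 := l2_nonneg x (𝕜 := 𝕜); have h4 := l2_nonneg y (𝕜 := 𝕜)
        nlinarith [Real.sqrt_nonneg (∑ i, ∑ j, ‖M i j‖ ^ 2)]

lemma theta_nonneg {ι : Type*} [Fintype ι] (s : ℕ) (M : Matrix ι ι 𝕜) : 0 ≤ theta s M :=
  le_csInf (theta_set_nonempty s M) (fun _ hδ => hδ.1)

lemma theta_spec {ι : Type*} [Fintype ι] (s : ℕ) (M : Matrix ι ι 𝕜)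
    (J : Finset ι) (hJ : J.card ≤ s) (x y : ι → 𝕜)
    (hx : ∀ i, x i ≠ 0 → i ∈ J) (hy : ∀ i, y i ≠ 0 → i ∈ J) :
    ‖star y ⬝ᵥ M.mulVec x - star y ⬝ᵥ x‖ ≤ theta s M * l2 x * l2 y := by
  apply le_of_forall_pos_le_add
  intro ε hε
  have hpos : 0 < l2 x * l2 y + 1 := by
    have := l2_nonneg x (𝕜 := 𝕜); have := l2_nonneg y (𝕜 := 𝕜); nlinarith
  obtain ⟨δ, hδmem, hδlt⟩ := Real.lt_sInf_add_pos (theta_set_nonempty s M)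
    (show (0:ℝ) < ε / (l2 x * l2 y + 1) by positivity)
  have hb := hδmem.2 J hJ x y hx hy
  have hle : δ * l2 x * l2 y ≤ theta s M * l2 x * l2 y + ε := by
    have h1 : δ ≤ theta s M + ε / (l2 x * l2 y + 1) := le_of_lt hδlt
    have h2 : 0 ≤ l2 x * l2 y := mul_nonneg (l2_nonneg x) (l2_nonneg y)
    have h3 : (ε / (l2 x * l2 y + 1)) * (l2 x * l2 y) ≤ ε := by
      rw [div_mul_eq_mul_div, div_le_iff₀ hpos]; nlinarith
    nlinarith
  linarith [hb]

lemma ric_set_nonempty {ι κ : Type*} [Fintype ι] [Fintype κ] (s : ℕ) (Ψ : Matrix ι κ 𝕜) :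
    {δ : ℝ | 0 ≤ δ ∧ ∀ x : κ → 𝕜, Sparse s x →
    (1 - δ) * l2 x ^ 2 ≤ l2 (Ψ.mulVec x) ^ 2 ∧
      l2 (Ψ.mulVec x) ^ 2 ≤ (1 + δ) * l2 x ^ 2}.Nonempty := by
  refine ⟨1 + ∑ i, ∑ j, ‖Ψ i j‖ ^ 2, ⟨by positivity, ?_⟩⟩
  intro x _
  constructor
  · have h1 : (1 - (1 + ∑ i, ∑ j, ‖Ψ i j‖ ^ 2)) ≤ 0 := by
      have : (0:ℝ) ≤ ∑ i, ∑ j, ‖Ψ i j‖ ^ 2 := by positivity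
      linarith
    have h2 : (0:ℝ) ≤ l2 x ^ 2 := by positivity
    nlinarith [sq_nonneg (l2 (Ψ.mulVec x))]
  · have := l2_mulVec_sq_le Ψ x
    have h2 : (0:ℝ) ≤ l2 x ^ 2 := by positivity
    nlinarith

lemma ric_nonneg {ι κ : Type*} [Fintype ι] [Fintype κ] (s : ℕ) (Ψ : Matrix ι κ 𝕜) :
    0 ≤ ric s Ψ := le_csInf (ric_set_nonempty s Ψ) (fun _ hδ => hδ.1)

lemma ric_upper {ι κ : Type*} [Fintype ι] [Fintype κ] (s : ℕ) (Ψ : Matrix ι κ 𝕜)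
    (x : κ → 𝕜) (hx : Sparse s x) :
    l2 (Ψ.mulVec x) ^ 2 ≤ (1 + ric s Ψ) * l2 x ^ 2 := by
  apply le_of_forall_pos_le_add
  intro ε hε
  have hpos : 0 < l2 x ^ 2 + 1 := by positivity
  obtain ⟨δ, hδmem, hδlt⟩ := Real.lt_sInf_add_pos (ric_set_nonempty s Ψ)
    (show (0:ℝ) < ε / (l2 x ^ 2 + 1) by positivity)
  have hb := (hδmem.2 x hx).2
  have h1 : δ ≤ ric s Ψ + ε / (l2 x ^ 2 + 1) := le_of_lt hδlt
  have h2 : (0:ℝ) ≤ l2 x ^ 2 := by positivity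
  have h3 : (ε / (l2 x ^ 2 + 1)) * (l2 x ^ 2) ≤ ε := by
    rw [div_mul_eq_mul_div, div_le_iff₀ hpos]; nlinarith
  nlinarith

lemma l2_mulVec_le_sqrt_ric {ι κ : Type*} [Fintype ι] [Fintype κ] (s : ℕ)
    (Ψ : Matrix ι κ 𝕜) (x : κ → 𝕜) (hx : Sparse s x) :
    l2 (Ψ.mulVec x) ≤ Real.sqrt (1 + ric s Ψ) * l2 x := by
  have h1 := ric_upper s Ψ x hx
  have h2 : l2 (Ψ.mulVec x) = Real.sqrt (l2 (Ψ.mulVec x) ^ 2) :=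
    (Real.sqrt_sq (l2_nonneg _)).symm
  rw [h2]
  calc Real.sqrt (l2 (Ψ.mulVec x) ^ 2) ≤ Real.sqrt ((1 + ric s Ψ) * l2 x ^ 2) :=
        Real.sqrt_le_sqrt h1
    _ = Real.sqrt (1 + ric s Ψ) * l2 x := by
        rw [Real.sqrt_mul (by linarith [ric_nonneg s Ψ (𝕜 := 𝕜)]), Real.sqrt_sq (l2_nonneg _)]

lemma ric_dot_le {m n : ℕ} (s : ℕ) (Ψt : Matrix (Fin m) (Fin n) 𝕜)
    (v : Fin n → 𝕜) (hv : Sparse s v) (z : Fin m → 𝕜) :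
    ‖star v ⬝ᵥ (Ψtᴴ.mulVec z)‖ ≤ Real.sqrt (1 + ric s Ψt) * l2 v * l2 z := by
  rw [adjoint_dot]
  calc ‖star (Ψt.mulVec v) ⬝ᵥ z‖ ≤ l2 (Ψt.mulVec v) * l2 z := norm_dot_le _ _
    _ ≤ (Real.sqrt (1 + ric s Ψt) * l2 v) * l2 z :=
        mul_le_mul_of_nonneg_right (l2_mulVec_le_sqrt_ric s Ψt v hv) (l2_nonneg _)
    _ = Real.sqrt (1 + ric s Ψt) * l2 v * l2 z := by ring

lemma sq_cancel_helper {a c : ℝ} (ha : 0 ≤ a) (hc : 0 ≤ c) (h : a ^ 2 ≤ c * a) : a ≤ c := by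
  by_contra hcon
  push_neg at hcon
  nlinarith

lemma norm_coe_nonneg {r : ℝ} (hr : 0 ≤ r) : ‖((r : ℝ) : 𝕜)‖ = r := by
  rw [RCLike.norm_ofReal]; exact abs_of_nonneg hr

lemma ric_proj_noise {m n : ℕ} (s : ℕ) (Ψt : Matrix (Fin m) (Fin n) 𝕜)
    (V : Finset (Fin n)) (hV : V.card ≤ s) (z : Fin m → 𝕜) :
    l2 (proj V (Ψtᴴ.mulVec z)) ≤ Real.sqrt (1 + ric s Ψt) * l2 z := by
  set v := proj V (Ψtᴴ.mulVec z) with hv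
  have hsp : Sparse s v := by
    refine ⟨V, hV, fun i h => ?_⟩
    by_contra hi
    apply h; rw [hv]; unfold proj; simp [hi]
  have h1 : l2 v ^ 2 = ‖star v ⬝ᵥ (Ψtᴴ.mulVec z)‖ := by
    rw [hv, star_proj_dot_l2, norm_coe_nonneg (by positivity)]
  have h2 := ric_dot_le s Ψt v hsp z
  rw [← h1] at h2
  exact sq_cancel_helper (l2_nonneg _) (mul_nonneg (Real.sqrt_nonneg _) (l2_nonneg _))
    (by nlinarith [h2])

lemma theta_op {ι : Type*} [Fintype ι] [DecidableEq ι] (s : ℕ) (M : Matrix ι ι 𝕜)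
    (J' V : Finset ι) (hJ' : J'.card ≤ s) (hV : V ⊆ J') (u : ι → 𝕜)
    (hu : ∀ i, u i ≠ 0 → i ∈ J') :
    l2 (proj V (M.mulVec u - u)) ≤ theta s M * l2 u := by
  set v := proj V (M.mulVec u - u) with hv
  have hsupp : ∀ i, v i ≠ 0 → i ∈ J' := by
    intro i h
    apply hV
    by_contra hi
    apply h; rw [hv]; unfold proj; simp [hi]
  have h1 : l2 v ^ 2 = ‖star v ⬝ᵥ M.mulVec u - star v ⬝ᵥ u‖ := by
    rw [← dotProduct_sub, hv, star_proj_dot_l2, norm_coe_nonneg (by positivity)]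
  have h2 := theta_spec s M J' hJ' u v hu hsupp
  rw [← h1] at h2
  exact sq_cancel_helper (l2_nonneg _) (mul_nonneg (theta_nonneg s M) (l2_nonneg _))
    (by nlinarith [h2])

/-! pure real arithmetic lemmas -/

lemma step_a {θ B2 A D N : ℝ} (hθ0 : 0 ≤ θ) (hθ1 : θ < 1)
    (hB20 : 0 ≤ B2) (hA0 : 0 ≤ A) (hD0 : 0 ≤ D) (hN0 : 0 ≤ N)
    (F4 : (1-θ)*D ≤ θ*A + N) (F5 : B2^2 ≤ A^2 + 4*D^2) :
    (1-θ)*B2 ≤ Real.sqrt ((1-θ)^2+4*θ^2) * A + 2*N := by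
  have h1θ : (0:ℝ) < 1 - θ := by linarith
  set q := Real.sqrt ((1-θ)^2+4*θ^2) with hq
  have hq_sq : q^2 = (1-θ)^2+4*θ^2 := Real.sq_sqrt (by positivity)
  have hq0 : 0 ≤ q := Real.sqrt_nonneg _
  have h2θq : 2*θ ≤ q := by
    have : (2*θ)^2 ≤ (1-θ)^2+4*θ^2 := by nlinarith [sq_nonneg (1-θ)]
    calc 2*θ = Real.sqrt ((2*θ)^2) := (Real.sqrt_sq (by linarith)).symm
      _ ≤ q := Real.sqrt_le_sqrt this
  have key : ((1-θ)*B2)^2 ≤ (q*A + 2*N)^2 := by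
    have h4 : ((1-θ)*D)^2 ≤ (θ*A+N)^2 := by
      apply sq_le_sq' _ F4
      nlinarith [mul_nonneg h1θ.le hD0, mul_nonneg (mul_nonneg hθ0 hA0) hN0,
        mul_nonneg hθ0 hA0]
    nlinarith [mul_nonneg (mul_nonneg hA0 hN0) (sub_nonneg.2 h2θq)]
  have h5 : 0 ≤ q*A + 2*N := by positivity
  have h6 : 0 ≤ (1-θ)*B2 := mul_nonneg h1θ.le hB20
  nlinarith [key, h5, h6]

lemma step_b {θ E B2 N s1 : ℝ} (hθ0 : 0 ≤ θ) (hθ1 : θ < 1)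
    (hE0 : 0 ≤ E) (hB20 : 0 ≤ B2) (hN0 : 0 ≤ N)
    (hs1 : s1 = Real.sqrt (1-θ^2))
    (F3 : E^2 ≤ (θ*E + N)^2 + B2^2) :
    (1-θ)*s1*E ≤ (1-θ)*B2 + s1*N := by
  have h1θ : (0:ℝ) < 1 - θ := by linarith
  have h1θ2 : (0:ℝ) < 1 - θ^2 := by nlinarith
  have hs1_pos : 0 < s1 := by rw [hs1]; exact Real.sqrt_pos.2 h1θ2
  have hs1_sq : s1^2 = 1 - θ^2 := by rw [hs1]; exact Real.sq_sqrt h1θ2.le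
  by_contra hcon
  push_neg at hcon
  have hNcE : N < (1-θ)*E := by
    by_contra hN
    push_neg at hN
    have h1 : (1-θ)*s1*E ≤ s1*N := by
      calc (1-θ)*s1*E = s1*((1-θ)*E) := by ring
        _ ≤ s1*N := mul_le_mul_of_nonneg_left hN hs1_pos.le
    nlinarith [mul_nonneg h1θ.le hB20]
  have hsq : ((1-θ)*B2)^2 < (s1*((1-θ)*E - N))^2 := by
    have ha : 0 ≤ (1-θ)*B2 := mul_nonneg h1θ.le hB20
    have hb : (1-θ)*B2 < s1*((1-θ)*E - N) := by nlinarith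
    nlinarith
  nlinarith [hsq, mul_le_mul_of_nonneg_left F3 (sq_nonneg (1-θ)), hs1_sq,
    mul_nonneg (mul_nonneg h1θ.le hN0) (sub_nonneg.2 hNcE.le)]

lemma sqrtQ2_le_1 {θ : ℝ} (hθ0 : 0 ≤ θ) (hθ1 : θ < 1) (h6 : 1/6 ≤ θ) :
    Real.sqrt (2*((1-θ)^2+4*θ^2)) ≤ (1+θ)/(1-θ) := by
  have h1θ : (0:ℝ) < 1 - θ := by linarith
  have key : 2*((1-θ)^2+4*θ^2) ≤ ((1+θ)/(1-θ))^2 := by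
    rw [div_pow, le_div_iff₀ (by positivity)]
    nlinarith [mul_nonneg (sub_nonneg.2 h6) (sub_nonneg.2 hθ1.le),
      sq_nonneg (θ - 1/6), sq_nonneg θ, mul_nonneg (mul_nonneg (sub_nonneg.2 h6) (sub_nonneg.2 h6)) (sub_nonneg.2 hθ1.le)]
  calc Real.sqrt (2*((1-θ)^2+4*θ^2)) ≤ Real.sqrt (((1+θ)/(1-θ))^2) := Real.sqrt_le_sqrt key
    _ = (1+θ)/(1-θ) := Real.sqrt_sq (by positivity)

lemma sqrtQ2_le_2 {θ : ℝ} (hθ0 : 0 ≤ θ) (h6 : θ ≤ 1/6) :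
    Real.sqrt (2*((1-θ)^2+4*θ^2)) ≤ 2*(1-θ^2)/(1+2*θ+2*θ^2) := by
  have hd : (0:ℝ) < 1+2*θ+2*θ^2 := by positivity
  have key : 2*((1-θ)^2+4*θ^2) ≤ (2*(1-θ^2)/(1+2*θ+2*θ^2))^2 := by
    rw [div_pow, le_div_iff₀ (by positivity)]
    nlinarith [mul_nonneg (sub_nonneg.2 h6) hθ0, sq_nonneg (θ - 1/6), sq_nonneg θ,
      mul_nonneg (mul_nonneg (sub_nonneg.2 h6) (sub_nonneg.2 h6)) hθ0]
  calc Real.sqrt (2*((1-θ)^2+4*θ^2)) ≤ Real.sqrt ((2*(1-θ^2)/(1+2*θ+2*θ^2))^2) :=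
        Real.sqrt_le_sqrt key
    _ = 2*(1-θ^2)/(1+2*θ+2*θ^2) := Real.sqrt_sq (div_nonneg (by nlinarith) (by positivity))

lemma sqrtQ2_le_3 {θ : ℝ} (hθ0 : 0 ≤ θ) (hθ1 : θ < 1) :
    Real.sqrt (2*((1-θ)^2+4*θ^2)) ≤ 2*(1+θ)/(1-θ)^2 := by
  have h1θ : (0:ℝ) < 1 - θ := by linarith
  have key : 2*((1-θ)^2+4*θ^2) ≤ (2*(1+θ)/(1-θ)^2)^2 := by
    rw [div_pow, le_div_iff₀ (by positivity)]
    nlinarith [sq_nonneg θ, sq_nonneg (1-θ), mul_nonneg hθ0 (sub_nonneg.2 hθ1.le),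
      pow_nonneg (sub_nonneg.2 hθ1.le) 4, pow_nonneg (sub_nonneg.2 hθ1.le) 3,
      mul_nonneg (mul_nonneg hθ0 hθ0) (pow_nonneg (sub_nonneg.2 hθ1.le) 4)]
  calc Real.sqrt (2*((1-θ)^2+4*θ^2)) ≤ Real.sqrt ((2*(1+θ)/(1-θ)^2)^2) := Real.sqrt_le_sqrt key
    _ = 2*(1+θ)/(1-θ)^2 := Real.sqrt_sq (by positivity)

lemma master1 {θ : ℝ} (hθ0 : 0 ≤ θ) (hθ1 : θ < 1) :
    Real.sqrt 2 * Real.sqrt ((1-θ)^2+4*θ^2) * θ ≤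
      (1+θ) * max (θ/(1-θ)) (2*θ*(1-θ)/(1+2*θ+2*θ^2)) := by
  have h1θ : (0:ℝ) < 1 - θ := by linarith
  have hQ : Real.sqrt 2 * Real.sqrt ((1-θ)^2+4*θ^2) = Real.sqrt (2*((1-θ)^2+4*θ^2)) :=
    (Real.sqrt_mul (by norm_num) _).symm
  rw [hQ]
  rcases le_or_gt (1/6 : ℝ) θ with h6 | h6
  · have h1 := sqrtQ2_le_1 hθ0 hθ1 h6
    calc Real.sqrt (2*((1-θ)^2+4*θ^2)) * θ ≤ ((1+θ)/(1-θ)) * θ :=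
          mul_le_mul_of_nonneg_right h1 hθ0
      _ = (1+θ) * (θ/(1-θ)) := by ring
      _ ≤ (1+θ) * max (θ/(1-θ)) (2*θ*(1-θ)/(1+2*θ+2*θ^2)) :=
          mul_le_mul_of_nonneg_left (le_max_left _ _) (by linarith)
  · have h1 := sqrtQ2_le_2 hθ0 h6.le
    calc Real.sqrt (2*((1-θ)^2+4*θ^2)) * θ ≤ (2*(1-θ^2)/(1+2*θ+2*θ^2)) * θ :=
          mul_le_mul_of_nonneg_right h1 hθ0
      _ = (1+θ) * (2*θ*(1-θ)/(1+2*θ+2*θ^2)) := by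
          field_simp; ring
      _ ≤ (1+θ) * max (θ/(1-θ)) (2*θ*(1-θ)/(1+2*θ+2*θ^2)) :=
          mul_le_mul_of_nonneg_left (le_max_right _ _) (by linarith)

lemma master2 {θ δ δt ct : ℝ} (hθ0 : 0 ≤ θ) (hθ1 : θ < 1) (hδ0 : 0 ≤ δ) (hδt0 : 0 ≤ δt)
    (hct : ct = Real.sqrt (1+δt)) :
    Real.sqrt 2 * Real.sqrt ((1-θ)^2+4*θ^2) * ct ≤
      (1+θ) * (max (1/(1-θ)) (2*(1-θ)/(1+2*θ+2*θ^2)) * (2*Real.sqrt (1+δ)*(1+δt)/(1-θ))) := by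
  have h1θ : (0:ℝ) < 1 - θ := by linarith
  have hct1 : 1 ≤ ct := by
    have h := Real.sqrt_le_sqrt (show (1:ℝ) ≤ 1 + δt by linarith)
    rw [hct]; simpa using h
  have hct0 : (0:ℝ) < ct := by linarith
  have hct_sq : ct^2 = 1 + δt := by rw [hct]; exact Real.sq_sqrt (by linarith)
  have hδs1 : 1 ≤ Real.sqrt (1+δ) := by
    have h := Real.sqrt_le_sqrt (show (1:ℝ) ≤ 1 + δ by linarith)
    simpa using h
  have hQ : Real.sqrt 2 * Real.sqrt ((1-θ)^2+4*θ^2) = Real.sqrt (2*((1-θ)^2+4*θ^2)) :=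
    (Real.sqrt_mul (by norm_num) _).symm
  rw [hQ]
  have h1 := sqrtQ2_le_3 hθ0 hθ1
  have hfac : 0 ≤ 2*Real.sqrt (1+δ)*(1+δt)/(1-θ) := div_nonneg (by positivity) h1θ.le
  calc Real.sqrt (2*((1-θ)^2+4*θ^2)) * ct ≤ (2*(1+θ)/(1-θ)^2) * ct :=
        mul_le_mul_of_nonneg_right h1 hct0.le
    _ = (1+θ) * ((1/(1-θ)) * (2*ct/(1-θ))) := by field_simp
    _ ≤ (1+θ) * ((1/(1-θ)) * (2*Real.sqrt (1+δ)*(1+δt)/(1-θ))) := by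
        apply mul_le_mul_of_nonneg_left _ (by linarith : (0:ℝ) ≤ 1+θ)
        apply mul_le_mul_of_nonneg_left _ (div_nonneg zero_le_one h1θ.le)
        apply (div_le_div_iff_of_pos_right h1θ).mpr
        nlinarith
    _ ≤ (1+θ) * (max (1/(1-θ)) (2*(1-θ)/(1+2*θ+2*θ^2)) * (2*Real.sqrt (1+δ)*(1+δt)/(1-θ))) := by
        apply mul_le_mul_of_nonneg_left _ (by linarith : (0:ℝ) ≤ 1+θ)
        exact mul_le_mul_of_nonneg_right (le_max_left _ _) hfac

set_option maxHeartbeats 1000000 in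
lemma key_real {θ δ δt E A B2 D U Z ρ₁ τ₁ ρ₂ τ₂ ρ₃ τ₃ ρ τ : ℝ}
    (hθ0 : 0 ≤ θ) (hθ1 : θ < 1) (hδ0 : 0 ≤ δ) (hδt0 : 0 ≤ δt)
    (hE0 : 0 ≤ E) (hA0 : 0 ≤ A) (hB20 : 0 ≤ B2) (hD0 : 0 ≤ D) (hU0 : 0 ≤ U) (hZ0 : 0 ≤ Z)
    (F3 : E^2 ≤ (θ*E + Real.sqrt (1+δt)*Z)^2 + B2^2)
    (F4 : (1-θ)*D ≤ θ*A + Real.sqrt (1+δt)*Z)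
    (F5 : B2^2 ≤ A^2 + 4*D^2)
    (F6 : A ≤ Real.sqrt 2 * (θ*U + Real.sqrt (1+δt)*Z))
    (hρ₁ : ρ₁ = 1 / Real.sqrt (1 - θ ^ 2))
    (hτ₁ : τ₁ = Real.sqrt (1 + δt) / (1 - θ))
    (hρ₂ : ρ₂ = (1 + θ) / (1 - θ))
    (hτ₂ : τ₂ = 2 * Real.sqrt (1 + δt) / (1 - θ))
    (hρ₃ : ρ₃ = max (θ / (1 - θ)) (2 * θ * (1 - θ) / (1 + 2 * θ + 2 * θ ^ 2)))
    (hτ₃ : τ₃ = max (1 / (1 - θ)) (2 * (1 - θ) / (1 + 2 * θ + 2 * θ ^ 2)) *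
      (2 * Real.sqrt (1 + δ) * (1 + δt) / (1 - θ)))
    (hρ : ρ = ρ₁ * ρ₂ * ρ₃) (hτ : τ = τ₁ + ρ₁ * τ₂ + ρ₁ * ρ₂ * τ₃) :
    E ≤ ρ * U + τ * Z := by
  have h1θ : (0:ℝ) < 1 - θ := by linarith
  have h1θ2 : (0:ℝ) < 1 - θ^2 := by nlinarith
  set ct := Real.sqrt (1+δt) with hct
  set s1 := Real.sqrt (1-θ^2) with hs1
  have hs1_pos : 0 < s1 := Real.sqrt_pos.2 h1θ2
  have hct0 : 0 ≤ ct := Real.sqrt_nonneg _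
  have hN0 : 0 ≤ ct * Z := mul_nonneg hct0 hZ0
  set q := Real.sqrt ((1-θ)^2+4*θ^2) with hq
  have hq0 : 0 ≤ q := Real.sqrt_nonneg _
  have ha := step_a hθ0 hθ1 hB20 hA0 hD0 hN0 F4 F5
  have hb := step_b hθ0 hθ1 hE0 hB20 hN0 hs1 F3
  have hc : (1-θ)*s1*E ≤ q*A + 2*(ct*Z) + s1*(ct*Z) := by
    calc (1-θ)*s1*E ≤ (1-θ)*B2 + s1*(ct*Z) := hb
      _ ≤ (q*A + 2*(ct*Z)) + s1*(ct*Z) := by linarith [ha]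
  have hd : (1-θ)*s1*E ≤ Real.sqrt 2 * q * θ * U + Real.sqrt 2 * q * ct * Z
      + 2*(ct*Z) + s1*(ct*Z) := by
    have h1 : q*A ≤ Real.sqrt 2 * q * θ * U + Real.sqrt 2 * q * ct * Z := by
      calc q*A ≤ q * (Real.sqrt 2 * (θ*U + ct*Z)) := mul_le_mul_of_nonneg_left F6 hq0
        _ = Real.sqrt 2 * q * θ * U + Real.sqrt 2 * q * ct * Z := by ring
    linarith [hc, h1]
  have hM1 := master1 hθ0 hθ1
  have hM2 := master2 hθ0 hθ1 hδ0 hδt0 hct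
  have he : (1-θ)*s1*E ≤ (1+θ)*ρ₃*U + (1+θ)*τ₃*Z + 2*(ct*Z) + s1*(ct*Z) := by
    have h1 : Real.sqrt 2 * q * θ * U ≤ (1+θ)*ρ₃*U := by
      rw [hρ₃]; exact mul_le_mul_of_nonneg_right hM1 hU0
    have h2 : Real.sqrt 2 * q * ct * Z ≤ (1+θ)*τ₃*Z := by
      rw [hτ₃]
      exact mul_le_mul_of_nonneg_right (by rw [← mul_assoc] at hM2 ⊢; exact hM2) hZ0
    linarith
  have hpos : 0 < (1-θ)*s1 := mul_pos h1θ hs1_pos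
  have hfinal : E ≤ ((1+θ)*ρ₃*U + ((1+θ)*τ₃ + 2*ct + s1*ct)*Z) / ((1-θ)*s1) := by
    rw [le_div_iff₀ hpos]
    calc E * ((1-θ)*s1) = (1-θ)*s1*E := by ring
      _ ≤ (1+θ)*ρ₃*U + (1+θ)*τ₃*Z + 2*(ct*Z) + s1*(ct*Z) := he
      _ = (1+θ)*ρ₃*U + ((1+θ)*τ₃ + 2*ct + s1*ct)*Z := by ring
  have hs1ne : s1 ≠ 0 := ne_of_gt hs1_pos
  have h1θne : (1-θ) ≠ 0 := ne_of_gt h1θ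
  refine hfinal.trans (le_of_eq ?_)
  rw [hρ, hτ, hρ₁, hρ₂, hτ₁, hτ₂]
  field_simp
  ring

lemma rho_lt_one {θ : ℝ} (hθ0 : 0 ≤ θ) (hθ : θ < 0.325) :
    (1 / Real.sqrt (1 - θ ^ 2)) * ((1 + θ) / (1 - θ)) *
      max (θ / (1 - θ)) (2 * θ * (1 - θ) / (1 + 2 * θ + 2 * θ ^ 2)) < 1 := by
  have hθ' : θ < 13/40 := by norm_num at hθ ⊢; linarith
  have hθ1 : θ < 1 := by linarith
  have h1θ : (0:ℝ) < 1 - θ := by linarith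
  have h1θ2 : (0:ℝ) < 1 - θ^2 := by nlinarith
  set s1 := Real.sqrt (1-θ^2) with hs1
  have hs1_pos : 0 < s1 := Real.sqrt_pos.2 h1θ2
  have hs1_sq : s1^2 = 1 - θ^2 := Real.sq_sqrt h1θ2.le
  have hcpos : (0:ℝ) < (1 / s1) * ((1 + θ) / (1 - θ)) := by positivity
  rw [mul_max_of_nonneg _ _ hcpos.le]
  apply max_lt
  · rw [div_mul_div_comm, one_mul, div_mul_div_comm, div_lt_one (by positivity)]
    have key : ((1+θ)*θ)^2 < (s1 * ((1-θ)*(1-θ)))^2 := by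
      have expand : (s1 * ((1-θ)*(1-θ)))^2 = (1-θ^2)*(1-θ)^4 := by
        rw [mul_pow, hs1_sq]; ring
      rw [expand]
      nlinarith [mul_nonneg hθ0 hθ0, mul_nonneg (mul_nonneg hθ0 hθ0) hθ0,
        sq_nonneg (13/40 - θ), mul_nonneg (sub_nonneg.2 hθ'.le) hθ0,
        mul_nonneg (mul_nonneg (sub_nonneg.2 hθ'.le) hθ0) hθ0,
        mul_nonneg (mul_nonneg (mul_nonneg (sub_nonneg.2 hθ'.le) hθ0) hθ0) hθ0,
        mul_nonneg (mul_nonneg (sub_nonneg.2 hθ'.le) (sub_nonneg.2 hθ'.le)) hθ0,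
        pow_nonneg (sub_nonneg.2 hθ'.le) 3, pow_nonneg (sub_nonneg.2 hθ'.le) 4,
        pow_nonneg (sub_nonneg.2 hθ'.le) 5]
    have hrhs : 0 ≤ s1 * ((1-θ)*(1-θ)) := by positivity
    have := lt_of_pow_lt_pow_left₀ 2 hrhs key
    linarith [this]
  · rw [div_mul_div_comm, one_mul, div_mul_div_comm, div_lt_one (by positivity)]
    have key : ((1+θ)*(2*θ*(1-θ)))^2 < (s1 * ((1-θ)*(1+2*θ+2*θ^2)))^2 := by
      have expand : (s1 * ((1-θ)*(1+2*θ+2*θ^2)))^2 = (1-θ^2)*((1-θ)*(1+2*θ+2*θ^2))^2 := by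
        rw [mul_pow, hs1_sq]
      rw [expand]
      nlinarith [mul_nonneg hθ0 hθ0, sq_nonneg (1-θ), mul_nonneg (sub_nonneg.2 hθ'.le) hθ0,
        sq_nonneg θ, pow_nonneg hθ0 3, pow_nonneg hθ0 4]
    have hrhs : 0 ≤ s1 * ((1-θ)*(1+2*θ+2*θ^2)) := by positivity
    have := lt_of_pow_lt_pow_left₀ 2 hrhs key
    linarith [this]

lemma le_of_sq_le_sq' {a b : ℝ} (ha : 0 ≤ a) (hb : 0 ≤ b) (h : a^2 ≤ b^2) : a ≤ b := by
  nlinarith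

lemma sum_sq_bound {t a b M : ℝ} (ht0 : 0 ≤ t) (ha : 0 ≤ a) (hb : 0 ≤ b)
    (ht : t ≤ a + b) (h : a^2 + b^2 ≤ M) : t^2 ≤ 2*M := by
  nlinarith [sq_nonneg (a-b)]

end Aux

set_option maxHeartbeats 4000000 in
/-- linear convergence of one full iteration of Oblique Subspace Pursuit. -/
theorem statement13 (m n s : ℕ) (Ψ Ψt : Matrix (Fin m) (Fin n) 𝕜)
    (xstar : Fin n → 𝕜) (Jstar : Finset (Fin n))
    (hsupp : ∀ i, xstar i ≠ 0 ↔ i ∈ Jstar) (hcard : Jstar.card ≤ s)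
    (z y : Fin m → 𝕜) (hy : y = Ψ.mulVec xstar + z)
    (θ δ δt : ℝ) (hθdef : θ = theta (3 * s) (Ψtᴴ * Ψ)) (hθ : θ < 1)
    (hδdef : δ = ric s Ψ) (hδtdef : δt = ric (2 * s) Ψt)
    (Jt : Finset (Fin n)) (hJt : Jt.card = s)
    (xt : Fin n → 𝕜) (hxtsupp : ∀ i, xt i ≠ 0 → i ∈ Jt)
    (hxtorth : ∀ j ∈ Jt, star (col Ψt j) ⬝ᵥ (y - Ψ.mulVec xt) = 0)
    (w : Fin n → 𝕜) (hw : w = Ψtᴴ.mulVec (y - Ψ.mulVec xt))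
    (Jbar : Finset (Fin n)) (hJbar : Jbar.card = s)
    (hJbarsel : ∀ j ∈ Jbar, ∀ l, l ∉ Jbar → ‖w l‖ ≤ ‖w j‖)
    (Jtil : Finset (Fin n)) (hJtildef : Jtil = Jt ∪ Jbar)
    (xtil : Fin n → 𝕜) (hxtilsupp : ∀ i, xtil i ≠ 0 → i ∈ Jtil)
    (hxtilorth : ∀ j ∈ Jtil, star (col Ψt j) ⬝ᵥ (y - Ψ.mulVec xtil) = 0)
    (Jnext : Finset (Fin n)) (hJnextsub : Jnext ⊆ Jtil) (hJnext : Jnext.card = s)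
    (hJnextsel : ∀ j ∈ Jnext, ∀ l ∈ Jtil \ Jnext, ‖xtil l‖ ≤ ‖xtil j‖)
    (xnext : Fin n → 𝕜) (hxnsupp : ∀ i, xnext i ≠ 0 → i ∈ Jnext)
    (hxnorth : ∀ j ∈ Jnext, star (col Ψt j) ⬝ᵥ (y - Ψ.mulVec xnext) = 0)
    (ρ₁ τ₁ ρ₂ τ₂ ρ₃ τ₃ ρ τ : ℝ)
    (hρ₁ : ρ₁ = 1 / Real.sqrt (1 - θ ^ 2))
    (hτ₁ : τ₁ = Real.sqrt (1 + δt) / (1 - θ))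
    (hρ₂ : ρ₂ = (1 + θ) / (1 - θ))
    (hτ₂ : τ₂ = 2 * Real.sqrt (1 + δt) / (1 - θ))
    (hρ₃ : ρ₃ = max (θ / (1 - θ)) (2 * θ * (1 - θ) / (1 + 2 * θ + 2 * θ ^ 2)))
    (hτ₃ : τ₃ = max (1 / (1 - θ)) (2 * (1 - θ) / (1 + 2 * θ + 2 * θ ^ 2)) *
      (2 * Real.sqrt (1 + δ) * (1 + δt) / (1 - θ)))
    (hρ : ρ = ρ₁ * ρ₂ * ρ₃) (hτ : τ = τ₁ + ρ₁ * τ₂ + ρ₁ * ρ₂ * τ₃) :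
    l2 (xnext - xstar) ≤ ρ * l2 (xt - xstar) + τ * l2 z ∧
      (θ < 0.325 → ρ < 1) := by
  classical
  -- numeric basics
  have hθ0 : 0 ≤ θ := by rw [hθdef]; exact theta_nonneg _ _
  have hδ0 : 0 ≤ δ := by rw [hδdef]; exact ric_nonneg _ _
  have hδt0 : 0 ≤ δt := by rw [hδtdef]; exact ric_nonneg _ _
  set T := Ψtᴴ * Ψ with hT
  set η := Ψtᴴ.mulVec z with hη
  set ct := Real.sqrt (1 + δt) with hctdef
  set Z := l2 z with hZdef
  have hZ0 : 0 ≤ Z := l2_nonneg _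
  have hct0 : 0 ≤ ct := Real.sqrt_nonneg _
  have hctZ0 : 0 ≤ ct * Z := mul_nonneg hct0 hZ0
  -- spec lemmas instantiated
  have hθspec : ∀ J : Finset (Fin n), J.card ≤ 3*s → ∀ x' y' : Fin n → 𝕜,
      (∀ i, x' i ≠ 0 → i ∈ J) → (∀ i, y' i ≠ 0 → i ∈ J) →
      ‖star y' ⬝ᵥ T.mulVec x' - star y' ⬝ᵥ x'‖ ≤ θ * l2 x' * l2 y' := by
    intro J hJ x' y' hx' hy'
    rw [hθdef]; exact theta_spec _ _ J hJ x' y' hx' hy'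
  have hθop : ∀ J' V : Finset (Fin n), J'.card ≤ 3*s → V ⊆ J' → ∀ u' : Fin n → 𝕜,
      (∀ i, u' i ≠ 0 → i ∈ J') → l2 (proj V (T.mulVec u' - u')) ≤ θ * l2 u' := by
    intro J' V hJ' hV u' hu'
    rw [hθdef]; exact theta_op _ _ J' V hJ' hV u' hu'
  have hnoise_dot : ∀ v : Fin n → 𝕜, Sparse (2*s) v → ‖star v ⬝ᵥ η‖ ≤ ct * l2 v * Z := by
    intro v hv
    rw [hctdef, hδtdef, hZdef, hη]; exact ric_dot_le (2*s) Ψt v hv z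
  have hnoise_proj : ∀ V : Finset (Fin n), V.card ≤ 2*s → l2 (proj V η) ≤ ct * Z := by
    intro V hV
    rw [hctdef, hδtdef, hZdef, hη]; exact ric_proj_noise (2*s) Ψt V hV z
  -- cardinalities
  have hJtil_card : Jtil.card ≤ 2*s := by
    rw [hJtildef]
    calc (Jt ∪ Jbar).card ≤ Jt.card + Jbar.card := Finset.card_union_le _ _
      _ ≤ 2*s := by omega
  -- orthogonality, pointwise form
  have horth : ∀ (x' : Fin n → 𝕜) (J : Finset (Fin n)),
      (∀ j ∈ J, star (col Ψt j) ⬝ᵥ (y - Ψ.mulVec x') = 0) →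
      ∀ j ∈ J, (T.mulVec (xstar - x')) j + η j = 0 := by
    intro x' J ho j hj
    have h1 : y - Ψ.mulVec x' = Ψ.mulVec (xstar - x') + z := by
      rw [hy, Matrix.mulVec_sub]; abel
    have h3 : T.mulVec (xstar - x') + η = Ψtᴴ.mulVec (Ψ.mulVec (xstar - x') + z) := by
      rw [Matrix.mulVec_add, hT, ← Matrix.mulVec_mulVec, hη]
    calc (T.mulVec (xstar - x')) j + η j = (T.mulVec (xstar - x') + η) j := rfl
      _ = Ψtᴴ.mulVec (Ψ.mulVec (xstar - x') + z) j := by rw [h3]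
      _ = star (col Ψt j) ⬝ᵥ (Ψ.mulVec (xstar - x') + z) := conjT_mulVec_apply _ _ _
      _ = 0 := by rw [← h1]; exact ho j hj
  have hdotzero : ∀ (x' : Fin n → 𝕜) (J : Finset (Fin n)),
      (∀ j ∈ J, (T.mulVec (xstar - x')) j + η j = 0) →
      ∀ v : Fin n → 𝕜, (∀ i, v i ≠ 0 → i ∈ J) →
      star v ⬝ᵥ T.mulVec (xstar - x') + star v ⬝ᵥ η = 0 := by
    intro x' J ho v hv
    have h1 : star v ⬝ᵥ (T.mulVec (xstar - x') + η) = star v ⬝ᵥ (0 : Fin n → 𝕜) := by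
      apply dot_agree
      intro i hi
      exact ho i (hv i hi)
    rw [dotProduct_add, dotProduct_zero] at h1
    exact h1
  -- ================== F1/F3 : the pruned least squares step ==================
  set ue := xstar - xnext with hue
  set e1 := proj Jnext ue with he1
  have he1supp : ∀ i, e1 i ≠ 0 → i ∈ Jnext := by
    intro i h
    by_contra hi
    apply h; rw [he1]; unfold proj; simp [hi]
  have hsp1 : Sparse (2*s) e1 := ⟨Jnext, by omega, he1supp⟩
  have huesupp : ∀ i, ue i ≠ 0 → i ∈ Jstar ∪ Jnext := by
    intro i hi
    rw [Finset.mem_union]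
    by_contra hcon
    push_neg at hcon
    apply hi
    have h1 : xstar i = 0 := by
      by_contra h; exact hcon.1 ((hsupp i).1 h)
    have h2 : xnext i = 0 := by
      by_contra h; exact hcon.2 (hxnsupp i h)
    rw [hue]; show xstar i - xnext i = 0; rw [h1, h2, sub_zero]
  have hcard1 : (Jstar ∪ Jnext).card ≤ 3*s := by
    calc (Jstar ∪ Jnext).card ≤ Jstar.card + Jnext.card := Finset.card_union_le _ _
      _ ≤ 3*s := by omega
  have hz1 : star e1 ⬝ᵥ T.mulVec ue + star e1 ⬝ᵥ η = 0 :=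
    hdotzero xnext Jnext (horth xnext Jnext hxnorth) e1 he1supp
  have hdot1 : star e1 ⬝ᵥ ue = ((l2 e1 ^ 2 : ℝ) : 𝕜) := by
    rw [he1]; exact star_proj_dot_l2 Jnext ue
  have hθ1 : ‖star e1 ⬝ᵥ T.mulVec ue - star e1 ⬝ᵥ ue‖ ≤ θ * l2 ue * l2 e1 :=
    hθspec (Jstar ∪ Jnext) hcard1 ue e1 huesupp
      (fun i hi => Finset.mem_union_right _ (he1supp i hi))
  have hn1 : ‖star e1 ⬝ᵥ η‖ ≤ ct * l2 e1 * Z := hnoise_dot e1 hsp1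
  have hkey1 : l2 e1 ^ 2 ≤ (θ * l2 ue + ct * Z) * l2 e1 := by
    have h0 : l2 e1 ^ 2 = ‖star e1 ⬝ᵥ ue‖ := by
      rw [hdot1, norm_coe_nonneg (by positivity)]
    calc l2 e1 ^ 2 = ‖star e1 ⬝ᵥ ue‖ := h0
      _ = ‖(star e1 ⬝ᵥ ue - star e1 ⬝ᵥ T.mulVec ue) + (star e1 ⬝ᵥ T.mulVec ue)‖ := by
          congr 1; ring
      _ ≤ ‖star e1 ⬝ᵥ ue - star e1 ⬝ᵥ T.mulVec ue‖ + ‖star e1 ⬝ᵥ T.mulVec ue‖ :=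
          norm_add_le _ _
      _ = ‖star e1 ⬝ᵥ T.mulVec ue - star e1 ⬝ᵥ ue‖ + ‖star e1 ⬝ᵥ η‖ := by
          rw [norm_sub_rev]
          congr 1
          have h2 : star e1 ⬝ᵥ T.mulVec ue = -(star e1 ⬝ᵥ η) := by
            linear_combination hz1
          rw [h2, norm_neg]
      _ ≤ θ * l2 ue * l2 e1 + ct * l2 e1 * Z := add_le_add hθ1 hn1
      _ = (θ * l2 ue + ct * Z) * l2 e1 := by ring
  have hF1 : l2 e1 ≤ θ * l2 ue + ct * Z := by
    apply sq_cancel_helper (l2_nonneg _) _ hkey1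
    have := l2_nonneg ue (𝕜 := 𝕜)
    positivity
  -- F3
  set Bv := proj (Finset.univ \ Jnext) xstar with hBv
  have hprojue : proj (Finset.univ \ Jnext) ue = Bv := by
    rw [hBv]
    funext i
    unfold proj
    by_cases hi : i ∈ Finset.univ \ Jnext
    · simp only [hi, if_true]
      have hxn : xnext i = 0 := by
        by_contra h
        have := hxnsupp i h
        simp [Finset.mem_sdiff] at hi
        exact hi this
      rw [hue]; show xstar i - xnext i = xstar i; rw [hxn, sub_zero]
    · simp [hi]
  have hF3 : l2 ue ^ 2 ≤ (θ * l2 ue + ct * Z)^2 + l2 Bv ^ 2 := by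
    have hsplit := l2_sq_split Jnext ue
    rw [hprojue, ← he1] at hsplit
    have h1 : l2 e1 ^ 2 ≤ (θ * l2 ue + ct * Z)^2 :=
      pow_le_pow_left₀ (l2_nonneg _) hF1 2
    linarith
  -- ================== F4 : the Jtil least squares step ==================
  set uh := xstar - xtil with huh
  set d := proj Jtil uh with hd
  set ac := proj (Finset.univ \ Jtil) xstar with hac
  have hdsupp : ∀ i, d i ≠ 0 → i ∈ Jtil := by
    intro i h; by_contra hi; apply h; rw [hd]; unfold proj; simp [hi]
  have hacsupp : ∀ i, ac i ≠ 0 → i ∈ Jstar := by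
    intro i h
    have hx : xstar i ≠ 0 := by
      intro hx0; apply h; rw [hac]; unfold proj; split <;> simp [hx0]
    exact (hsupp i).1 hx
  have hspd : Sparse (2*s) d := ⟨Jtil, hJtil_card, hdsupp⟩
  have hcard2 : (Jtil ∪ Jstar).card ≤ 3*s := by
    calc (Jtil ∪ Jstar).card ≤ Jtil.card + Jstar.card := Finset.card_union_le _ _
      _ ≤ 3*s := by omega
  have hz2 : star d ⬝ᵥ T.mulVec uh + star d ⬝ᵥ η = 0 :=
    hdotzero xtil Jtil (horth xtil Jtil hxtilorth) d hdsupp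
  have huh_split : uh = d + ac := by
    funext i
    show uh i = d i + ac i
    rw [hd, hac]
    show uh i = proj Jtil uh i + proj (Finset.univ \ Jtil) xstar i
    unfold proj
    by_cases hi : i ∈ Jtil
    · have hi2 : i ∉ Finset.univ \ Jtil := by simp [hi]
      rw [if_pos hi, if_neg hi2, add_zero]
    · have hi2 : i ∈ Finset.univ \ Jtil := by simp [hi]
      rw [if_neg hi, if_pos hi2, zero_add]
      have hxt : xtil i = 0 := by
        by_contra h; exact hi (hxtilsupp i h)
      rw [huh]; show xstar i - xtil i = xstar i; rw [hxt, sub_zero]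
  have hTsplit : star d ⬝ᵥ T.mulVec uh = star d ⬝ᵥ T.mulVec d + star d ⬝ᵥ T.mulVec ac := by
    conv_lhs => rw [huh_split, Matrix.mulVec_add, dotProduct_add]
  have hθd : ‖star d ⬝ᵥ T.mulVec d - star d ⬝ᵥ d‖ ≤ θ * l2 d * l2 d :=
    hθspec (Jtil ∪ Jstar) hcard2 d d
      (fun i hi => Finset.mem_union_left _ (hdsupp i hi))
      (fun i hi => Finset.mem_union_left _ (hdsupp i hi))
  have hθac : ‖star d ⬝ᵥ T.mulVec ac - star d ⬝ᵥ ac‖ ≤ θ * l2 ac * l2 d :=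
    hθspec (Jtil ∪ Jstar) hcard2 ac d
      (fun i hi => Finset.mem_union_right _ (hacsupp i hi))
      (fun i hi => Finset.mem_union_left _ (hdsupp i hi))
  have hdac : star d ⬝ᵥ ac = 0 := by
    have h1 : star d ⬝ᵥ ac = star d ⬝ᵥ (0 : Fin n → 𝕜) := by
      apply dot_agree
      intro i hi
      have := hdsupp i hi
      rw [hac]; unfold proj; simp [this]
    rw [h1, dotProduct_zero]
  have hdd : star d ⬝ᵥ d = ((l2 d ^ 2 : ℝ) : 𝕜) := by
    have h1 : star d ⬝ᵥ d = star d ⬝ᵥ uh := by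
      apply dot_agree
      intro i hi
      have hmem := hdsupp i hi
      rw [hd]; unfold proj; simp [hmem]
    rw [h1, hd]; exact star_proj_dot_l2 Jtil uh
  have hnd : ‖star d ⬝ᵥ η‖ ≤ ct * l2 d * Z := hnoise_dot d hspd
  have hkey2 : l2 d ^ 2 ≤ θ * (l2 d * l2 d) + (θ * l2 ac + ct * Z) * l2 d := by
    have h0 : l2 d ^ 2 = ‖star d ⬝ᵥ d‖ := by
      rw [hdd, norm_coe_nonneg (by positivity)]
    calc l2 d ^ 2 = ‖star d ⬝ᵥ d‖ := h0
      _ = ‖(star d ⬝ᵥ d - star d ⬝ᵥ T.mulVec d) + (star d ⬝ᵥ T.mulVec d)‖ := by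
          congr 1; ring
      _ ≤ ‖star d ⬝ᵥ d - star d ⬝ᵥ T.mulVec d‖ + ‖star d ⬝ᵥ T.mulVec d‖ := norm_add_le _ _
      _ = ‖star d ⬝ᵥ T.mulVec d - star d ⬝ᵥ d‖ + ‖star d ⬝ᵥ T.mulVec ac + star d ⬝ᵥ η‖ := by
          rw [norm_sub_rev]
          congr 1
          have h2 : star d ⬝ᵥ T.mulVec d = -(star d ⬝ᵥ T.mulVec ac + star d ⬝ᵥ η) := by
            have := hz2
            rw [hTsplit] at this
            linear_combination this
          rw [h2, norm_neg]
      _ ≤ ‖star d ⬝ᵥ T.mulVec d - star d ⬝ᵥ d‖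
            + (‖star d ⬝ᵥ T.mulVec ac‖ + ‖star d ⬝ᵥ η‖) := by
          have := norm_add_le (star d ⬝ᵥ T.mulVec ac) (star d ⬝ᵥ η)
          linarith
      _ ≤ θ * l2 d * l2 d + (θ * l2 ac * l2 d + ct * l2 d * Z) := by
          have h3 : ‖star d ⬝ᵥ T.mulVec ac‖ ≤ θ * l2 ac * l2 d := by
            have h4 : star d ⬝ᵥ T.mulVec ac = star d ⬝ᵥ T.mulVec ac - star d ⬝ᵥ ac := by
              rw [hdac, sub_zero]
            rw [h4]; exact hθac
          linarith [hθd, hnd]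
      _ = θ * (l2 d * l2 d) + (θ * l2 ac + ct * Z) * l2 d := by ring
  have hF4 : (1 - θ) * l2 d ≤ θ * l2 ac + ct * Z := by
    rcases eq_or_lt_of_le (l2_nonneg d (𝕜 := 𝕜)) with h0 | h0
    · rw [← h0, mul_zero]
      have := l2_nonneg ac (𝕜 := 𝕜)
      positivity
    · have h1 : ((1 - θ) * l2 d) * l2 d ≤ (θ * l2 ac + ct * Z) * l2 d := by
        nlinarith [hkey2]
      exact le_of_mul_le_mul_right h1 h0
  -- ================== F5 : pruning bound ==================
  have hsetsplit : (Jtil \ Jnext) ∪ (Finset.univ \ Jtil) = Finset.univ \ Jnext := by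
    ext i
    simp only [Finset.mem_union, Finset.mem_sdiff, Finset.mem_univ, true_and]
    constructor
    · rintro (⟨_, h⟩ | h)
      · exact h
      · intro hc; exact h (hJnextsub hc)
    · intro h
      by_cases hi : i ∈ Jtil
      · exact Or.inl ⟨hi, h⟩
      · exact Or.inr hi
  have hdisj1 : Disjoint (Jtil \ Jnext) (Finset.univ \ Jtil) := by
    rw [Finset.disjoint_left]
    intro i hi hi2
    simp only [Finset.mem_sdiff] at hi hi2
    exact hi2.2 hi.1
  have hB2split : l2 Bv ^ 2 = l2 (proj (Jtil \ Jnext) xstar) ^ 2 + l2 ac ^ 2 := by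
    rw [hBv, hac, l2_proj_sq, l2_proj_sq, l2_proj_sq, ← hsetsplit, Finset.sum_union hdisj1]
  have hD0 : 0 ≤ l2 d := l2_nonneg _
  have hpart : l2 (proj (Jtil \ Jnext) xstar) ≤ 2 * l2 d := by
    have htri : l2 (proj (Jtil \ Jnext) xstar) ≤
        l2 (proj (Jtil \ Jnext) uh) + l2 (proj (Jtil \ Jnext) xtil) := by
      have hsplit2 : proj (Jtil \ Jnext) xstar
          = proj (Jtil \ Jnext) uh + proj (Jtil \ Jnext) xtil := by
        rw [huh, proj_sub]
        abel
      rw [hsplit2]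
      exact l2_triangle _ _
    have h1 : l2 (proj (Jtil \ Jnext) uh) ≤ l2 d := by
      rw [hd]; exact l2_proj_mono (Finset.sdiff_subset) uh
    have h2 : l2 (proj (Jtil \ Jnext) xtil) ≤ l2 d := by
      have hsum : ∑ i ∈ Jtil \ Jnext, ‖xtil i‖ ^ 2 ≤ ∑ i ∈ Jtil, ‖uh i‖ ^ 2 := by
        have hstep1 : ∑ i ∈ Jtil \ Jnext, ‖xtil i‖ ^ 2
            = ∑ i ∈ (Jtil \ Jnext) ∩ Jstar, ‖xtil i‖ ^ 2
              + ∑ i ∈ (Jtil \ Jnext) \ Jstar, ‖xtil i‖ ^ 2 :=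
          (Finset.sum_inter_add_sum_sdiff _ _ _).symm
        have hstep2 : ∑ i ∈ (Jtil \ Jnext) ∩ Jstar, ‖xtil i‖ ^ 2
            ≤ ∑ j ∈ Jnext \ Jstar, ‖xtil j‖ ^ 2 := by
          apply sum_le_sum_sel _ _ _ (fun i => by positivity)
          · -- cards
            have hsub1 : (Jtil \ Jnext) ∩ Jstar ⊆ Jstar \ Jnext := by
              intro i hi
              simp only [Finset.mem_inter, Finset.mem_sdiff] at hi ⊢
              exact ⟨hi.2, hi.1.2⟩
            have hc1 := Finset.card_le_card hsub1
            have hc2 : (Jstar \ Jnext).card + (Jstar ∩ Jnext).card = Jstar.card :=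
              Finset.card_sdiff_add_card_inter _ _
            have hc3 : (Jnext \ Jstar).card + (Jnext ∩ Jstar).card = Jnext.card :=
              Finset.card_sdiff_add_card_inter _ _
            have hc4 : (Jstar ∩ Jnext).card = (Jnext ∩ Jstar).card := by
              rw [Finset.inter_comm]
            omega
          · intro i hi j hj
            simp only [Finset.mem_inter, Finset.mem_sdiff] at hi hj
            have := hJnextsel j hj.1 i (by
              simp only [Finset.mem_sdiff]
              exact hi.1)
            exact pow_le_pow_left₀ (norm_nonneg _) this 2
        have hdisj2 : Disjoint (Jnext \ Jstar) ((Jtil \ Jnext) \ Jstar) := by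
          rw [Finset.disjoint_left]
          intro i hi hi2
          simp only [Finset.mem_sdiff] at hi hi2
          exact hi2.1.2 hi.1
        have hstep3 : ∑ j ∈ Jnext \ Jstar, ‖xtil j‖ ^ 2
              + ∑ i ∈ (Jtil \ Jnext) \ Jstar, ‖xtil i‖ ^ 2
            ≤ ∑ i ∈ Jtil \ Jstar, ‖xtil i‖ ^ 2 := by
          rw [← Finset.sum_union hdisj2]
          apply Finset.sum_le_sum_of_subset_of_nonneg
          · intro i hi
            simp only [Finset.mem_union, Finset.mem_sdiff] at hi ⊢
            rcases hi with ⟨h1, h2⟩ | ⟨⟨h1, _⟩, h2⟩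
            · exact ⟨hJnextsub h1, h2⟩
            · exact ⟨h1, h2⟩
          · intros; positivity
        have hstep4 : ∑ i ∈ Jtil \ Jstar, ‖xtil i‖ ^ 2 = ∑ i ∈ Jtil \ Jstar, ‖uh i‖ ^ 2 := by
          apply Finset.sum_congr rfl
          intro i hi
          simp only [Finset.mem_sdiff] at hi
          have hx0 : xstar i = 0 := by
            by_contra h; exact hi.2 ((hsupp i).1 h)
          have : uh i = -(xtil i) := by
            rw [huh]; show xstar i - xtil i = -(xtil i); rw [hx0]; ring
          rw [this, norm_neg]
        have hstep5 : ∑ i ∈ Jtil \ Jstar, ‖uh i‖ ^ 2 ≤ ∑ i ∈ Jtil, ‖uh i‖ ^ 2 := by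
          apply Finset.sum_le_sum_of_subset_of_nonneg (Finset.sdiff_subset)
          intros; positivity
        calc ∑ i ∈ Jtil \ Jnext, ‖xtil i‖ ^ 2
            = ∑ i ∈ (Jtil \ Jnext) ∩ Jstar, ‖xtil i‖ ^ 2
              + ∑ i ∈ (Jtil \ Jnext) \ Jstar, ‖xtil i‖ ^ 2 := hstep1
          _ ≤ ∑ j ∈ Jnext \ Jstar, ‖xtil j‖ ^ 2
              + ∑ i ∈ (Jtil \ Jnext) \ Jstar, ‖xtil i‖ ^ 2 := by linarith
          _ ≤ ∑ i ∈ Jtil \ Jstar, ‖xtil i‖ ^ 2 := hstep3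
          _ = ∑ i ∈ Jtil \ Jstar, ‖uh i‖ ^ 2 := hstep4
          _ ≤ ∑ i ∈ Jtil, ‖uh i‖ ^ 2 := hstep5
      rw [l2_proj_eq, hd, l2_proj_eq]
      exact Real.sqrt_le_sqrt hsum
    linarith
  have hF5 : l2 Bv ^ 2 ≤ l2 ac ^ 2 + 4 * l2 d ^ 2 := by
    have h1 : l2 (proj (Jtil \ Jnext) xstar) ^ 2 ≤ (2 * l2 d)^2 :=
      pow_le_pow_left₀ (l2_nonneg _) hpart 2
    have h2 : (2 * l2 d)^2 = 4 * l2 d ^2 := by ring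
    linarith [hB2split]
  -- ================== F6 : identification bound ==================
  set u := xstar - xt with hu0
  set S := Jstar \ Jtil with hS
  set S' := Jbar \ (Jstar ∪ Jt) with hS'
  set K := Jstar \ Jt with hK
  have hwTη : w = T.mulVec u + η := by
    rw [hw, hy]
    have h1 : Ψ.mulVec xstar + z - Ψ.mulVec xt = Ψ.mulVec u + z := by
      rw [hu0, Matrix.mulVec_sub]; abel
    rw [h1, Matrix.mulVec_add, hT, ← Matrix.mulVec_mulVec, hη]
  have hSK : S = K \ Jbar := by
    rw [hS, hK, hJtildef]
    ext i
    simp only [Finset.mem_sdiff, Finset.mem_union]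
    tauto
  have hwJt : ∀ j ∈ Jt, w j = 0 := by
    intro j hj
    rw [hw, conjT_mulVec_apply]
    exact hxtorth j hj
  -- A equality
  have hAeq : l2 ac = l2 (proj S xstar) := by
    rw [hac, l2_proj_eq, l2_proj_eq]
    congr 1
    apply (Finset.sum_subset _ _).symm
    · intro i hi
      rw [hS] at hi
      simp only [Finset.mem_sdiff] at hi
      simp [hi.2]
    · intro i hi1 hi2
      have hx0 : xstar i = 0 := by
        by_contra h
        apply hi2
        rw [hS, Finset.mem_sdiff]
        refine ⟨(hsupp i).1 h, ?_⟩
        simp only [Finset.mem_sdiff, Finset.mem_univ, true_and] at hi1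
        exact hi1
      simp [hx0]
  -- triangle
  have hprojSu : proj S u = proj S xstar := by
    funext i
    unfold proj
    by_cases hi : i ∈ S
    · rw [if_pos hi, if_pos hi]
      have hxt0 : xt i = 0 := by
        by_contra h
        have hiJt := hxtsupp i h
        rw [hS, Finset.mem_sdiff, hJtildef] at hi
        exact hi.2 (Finset.mem_union_left _ hiJt)
      rw [hu0]; show xstar i - xt i = xstar i; rw [hxt0, sub_zero]
    · rw [if_neg hi, if_neg hi]
  have htri6 : l2 (proj S xstar) ≤ l2 (proj S (w - u)) + l2 (proj S w) := by
    have h1 : proj S xstar = -(proj S (w - u)) + proj S w := by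
      have h2 : proj S (w - u) = proj S w - proj S u := proj_sub S w u
      rw [h2, hprojSu]
      abel
    rw [h1]
    calc l2 (-(proj S (w - u)) + proj S w)
        ≤ l2 (-(proj S (w - u))) + l2 (proj S w) := l2_triangle _ _
      _ = l2 (proj S (w - u)) + l2 (proj S w) := by rw [l2_neg]
  -- selection
  have hsel6 : l2 (proj S w) ^ 2 ≤ l2 (proj S' w) ^ 2 := by
    rw [l2_proj_sq, l2_proj_sq]
    have hstep1 : ∑ i ∈ S, ‖w i‖ ^ 2 ≤ ∑ j ∈ Jbar \ K, ‖w j‖ ^ 2 := by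
      apply sum_le_sum_sel _ _ _ (fun i => by positivity)
      · have hc1 : (K \ Jbar).card + (K ∩ Jbar).card = K.card :=
          Finset.card_sdiff_add_card_inter _ _
        have hc2 : (Jbar \ K).card + (Jbar ∩ K).card = Jbar.card :=
          Finset.card_sdiff_add_card_inter _ _
        have hc3 : (K ∩ Jbar).card = (Jbar ∩ K).card := by rw [Finset.inter_comm]
        have hc4 : K.card ≤ Jstar.card := Finset.card_le_card (by rw [hK]; exact Finset.sdiff_subset)
        rw [hSK]
        omega
      · intro i hi j hj
        rw [hSK] at hi
        simp only [Finset.mem_sdiff] at hi hj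
        have := hJbarsel j hj.1 i hi.2
        exact pow_le_pow_left₀ (norm_nonneg _) this 2
    have hstep2 : ∑ j ∈ Jbar \ K, ‖w j‖ ^ 2 = ∑ j ∈ S', ‖w j‖ ^ 2 := by
      apply (Finset.sum_subset _ _).symm
      · intro j hj
        rw [hS'] at hj
        simp only [Finset.mem_sdiff, Finset.mem_union] at hj
        push_neg at hj
        rw [Finset.mem_sdiff, hK, Finset.mem_sdiff]
        exact ⟨hj.1, fun hc => hj.2.1 hc.1⟩
      · intro j hj1 hj2
        have hjt : j ∈ Jt := by
          rw [Finset.mem_sdiff, hK, Finset.mem_sdiff] at hj1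
          rw [hS'] at hj2
          simp only [Finset.mem_sdiff, Finset.mem_union] at hj2
          push_neg at hj2
          rcases hj2 hj1.1 with h | h
          · by_cases hjt : j ∈ Jt
            · exact hjt
            · exact absurd ⟨h, hjt⟩ hj1.2
          · exact h
        rw [hwJt j hjt]
        simp
    rw [hstep2] at hstep1
    exact hstep1
  have hS'wu : proj S' w = proj S' (w - u) := by
    funext i
    unfold proj
    by_cases hi : i ∈ S'
    · rw [if_pos hi, if_pos hi]
      have hu0i : u i = 0 := by
        rw [hS'] at hi
        simp only [Finset.mem_sdiff, Finset.mem_union] at hi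
        push_neg at hi
        have hx0 : xstar i = 0 := by
          by_contra h; exact hi.2.1 ((hsupp i).1 h)
        have hxt0 : xt i = 0 := by
          by_contra h; exact hi.2.2 (hxtsupp i h)
        rw [hu0]; show xstar i - xt i = 0; rw [hx0, hxt0, sub_zero]
      show w i = w i - u i
      rw [hu0i, sub_zero]
    · rw [if_neg hi, if_neg hi]
  have hdisj6 : Disjoint S S' := by
    rw [Finset.disjoint_left]
    intro i hi hi2
    rw [hS, Finset.mem_sdiff] at hi
    rw [hS'] at hi2
    simp only [Finset.mem_sdiff, Finset.mem_union] at hi2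
    push_neg at hi2
    exact hi2.2.1 hi.1
  have hquad : l2 (proj S (w-u)) ^ 2 + l2 (proj S' (w-u)) ^ 2
      = l2 (proj (S ∪ S') (w-u)) ^ 2 := by
    rw [l2_proj_sq, l2_proj_sq, l2_proj_sq, Finset.sum_union hdisj6]
  have hbig : l2 (proj (S ∪ S') (w-u)) ≤ θ * l2 u + ct * Z := by
    have hwu : w - u = (T.mulVec u - u) + η := by
      rw [hwTη]; abel
    have hcard3 : (Jstar ∪ Jt ∪ Jbar).card ≤ 3*s := by
      calc (Jstar ∪ Jt ∪ Jbar).card ≤ (Jstar ∪ Jt).card + Jbar.card :=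
            Finset.card_union_le _ _
        _ ≤ Jstar.card + Jt.card + Jbar.card := by
            have := Finset.card_union_le Jstar Jt
            omega
        _ ≤ 3*s := by omega
    have hVsub : S ∪ S' ⊆ Jstar ∪ Jt ∪ Jbar := by
      intro i hi
      rcases Finset.mem_union.1 hi with h | h
      · rw [hS, Finset.mem_sdiff] at h
        exact Finset.mem_union_left _ (Finset.mem_union_left _ h.1)
      · rw [hS', Finset.mem_sdiff] at h
        exact Finset.mem_union_right _ h.1
    have husupp : ∀ i, u i ≠ 0 → i ∈ Jstar ∪ Jt ∪ Jbar := by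
      intro i hi
      by_contra hcon
      simp only [Finset.mem_union, not_or] at hcon
      apply hi
      have hx0 : xstar i = 0 := by
        by_contra h; exact hcon.1.1 ((hsupp i).1 h)
      have hxt0 : xt i = 0 := by
        by_contra h; exact hcon.1.2 (hxtsupp i h)
      rw [hu0]; show xstar i - xt i = 0; rw [hx0, hxt0, sub_zero]
    have hcardV : (S ∪ S').card ≤ 2*s := by
      have h1 : S.card ≤ Jstar.card := by
        rw [hS]; exact Finset.card_le_card Finset.sdiff_subset
      have h2 : S'.card ≤ Jbar.card := by
        rw [hS']; exact Finset.card_le_card Finset.sdiff_subset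
      have h3 := Finset.card_union_le S S'
      omega
    calc l2 (proj (S ∪ S') (w-u))
        = l2 (proj (S ∪ S') (T.mulVec u - u) + proj (S ∪ S') η) := by
          rw [← proj_add, ← hwu]
      _ ≤ l2 (proj (S ∪ S') (T.mulVec u - u)) + l2 (proj (S ∪ S') η) := l2_triangle _ _
      _ ≤ θ * l2 u + ct * Z := by
          have h1 := hθop (Jstar ∪ Jt ∪ Jbar) (S ∪ S') hcard3 hVsub u husupp
          have h2 := hnoise_proj (S ∪ S') hcardV
          linarith
  -- assemble F6
  have hselle : l2 (proj S w) ≤ l2 (proj S' (w - u)) := by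
    rw [← hS'wu]
    exact le_of_sq_le_sq' (l2_nonneg _) (l2_nonneg _) hsel6
  have hF6 : l2 (proj S xstar) ≤ Real.sqrt 2 * (θ * l2 u + ct * Z) := by
    have hN6 : 0 ≤ θ * l2 u + ct * Z := by
      have := l2_nonneg u (𝕜 := 𝕜); positivity
    have hA2 : l2 (proj S xstar) ^ 2 ≤ 2 * (θ * l2 u + ct * Z)^2 := by
      have ht1 : l2 (proj S xstar) ≤ l2 (proj S (w-u)) + l2 (proj S' (w-u)) := by
        linarith [htri6, hselle]
      have ht2 : l2 (proj S (w-u)) ^ 2 + l2 (proj S' (w-u)) ^ 2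
          ≤ (θ * l2 u + ct * Z)^2 := by
        rw [hquad]
        exact pow_le_pow_left₀ (l2_nonneg _) hbig 2
      exact sum_sq_bound (l2_nonneg _) (l2_nonneg _) (l2_nonneg _) ht1 ht2
    calc l2 (proj S xstar) = Real.sqrt (l2 (proj S xstar) ^ 2) :=
          (Real.sqrt_sq (l2_nonneg _)).symm
      _ ≤ Real.sqrt (2 * (θ * l2 u + ct * Z)^2) := Real.sqrt_le_sqrt hA2
      _ = Real.sqrt 2 * (θ * l2 u + ct * Z) := by
          rw [Real.sqrt_mul (by norm_num), Real.sqrt_sq hN6]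
  -- ================== conclusion ==================
  have hF6' : l2 ac ≤ Real.sqrt 2 * (θ * l2 u + ct * Z) := by
    rw [hAeq]; exact hF6
  rw [hctdef] at hF1 hF3 hF4 hF6'
  constructor
  · have hE : l2 (xnext - xstar) = l2 ue := by rw [hue]; exact l2_sub_rev _ _
    have hU : l2 (xt - xstar) = l2 u := by rw [hu0]; exact l2_sub_rev _ _
    rw [hE, hU]
    exact key_real hθ0 hθ hδ0 hδt0 (l2_nonneg _) (l2_nonneg _) (l2_nonneg _)
      (l2_nonneg _) (l2_nonneg _) hZ0 hF3 hF4 hF5 hF6' hρ₁ hτ₁ hρ₂ hτ₂ hρ₃ hτ₃ hρ hτ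
  · intro hsm
    rw [hρ, hρ₁, hρ₂, hρ₃]
    exact rho_lt_one hθ0 hsm

end ObliquePursuit
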